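/- Let b ≥ 2 and let G be a graph on n vertices with domination number γ(G) > b. If n is sufficiently large (depending only on b), then some vertex of G has at least n^((b-1)/b) non-neighbors, and hence for any m ≤ n^((b-1)/b) the number of non-dominating m-sets in G is at least C(⌈n^((b-1)/b)⌉, m). -/

import Mathlib

def Dominates {V : Type*} (G : SimpleGraph V) (S : Finset V) : Prop :=
  ∀ v ∉ S, ∃ u ∈ S, G.Adj u v

noncomputable def domNum {V : Type*} [Fintype V] (G : SimpleGraph V) : ℕ :=
  sInf {k | ∃ S : Finset V, S.card = k ∧ Dominates G S}

noncomputable def nonDomCount {V : Type*} [Fintype V] (G : SimpleGraph V) (k : ℕ) : ℕ :=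
  letI : DecidablePred (fun S : Finset V => Dominates G S) := Classical.decPred _
  ((Finset.powersetCard k Finset.univ).filter (fun S => ¬ Dominates G S)).card

/-- Theorem 2.2: for `b ≥ 2` and `n` sufficiently large, any graph on `n`
vertices with `γ(G) > b` has a vertex with at least `n^((b-1)/b)` non-neighbors,
and hence at least `C(⌈n^((b-1)/b)⌉, m)` non-dominating `m`-sets for any
`m ≤ n^((b-1)/b)`. -/
theorem stmt8 (b : ℕ) (hb : 2 ≤ b) :
    ∃ N : ℕ, ∀ n : ℕ, N ≤ n → ∀ G : SimpleGraph (Fin n), ∀ _ : DecidableRel G.Adj,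
      b < domNum G →
      (∃ v : Fin n,
        (n : ℝ) ^ (((b : ℝ) - 1) / (b : ℝ)) ≤
          ((Finset.univ.filter (fun u => u ≠ v ∧ ¬ G.Adj u v)).card : ℝ)) ∧
      ∀ m : ℕ, (m : ℝ) ≤ (n : ℝ) ^ (((b : ℝ) - 1) / (b : ℝ)) →
        Nat.choose ⌈(n : ℝ) ^ (((b : ℝ) - 1) / (b : ℝ))⌉₊ m ≤ nonDomCount G m := by
  classical
  refine ⟨1, fun n hn G hGdec hdom => ?_⟩
  have hn0 : (0:ℝ) < n := by exact_mod_cast hn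
  set s : ℝ := (n:ℝ) ^ (((b:ℝ)-1)/(b:ℝ)) with hs
  have hspos : 0 < s := Real.rpow_pos_of_pos hn0 _
  set f : Fin n → Finset (Fin n) :=
    fun v => Finset.univ.filter (fun u => u ≠ v ∧ ¬ G.Adj u v) with hf
  have hb0 : (0:ℝ) < b := by positivity
  have hv : ∃ v, s ≤ ((f v).card : ℝ) := by
    by_contra hcon
    push_neg at hcon
    set undom : Finset (Fin n) → Finset (Fin n) :=
      fun S => Finset.univ.filter (fun u => u ∉ S ∧ ∀ w ∈ S, ¬ G.Adj w u) with hundom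
    -- symmetry of non-neighborhood
    have hsymm : ∀ u v : Fin n, u ∈ f v ↔ v ∈ f u := by
      intro u v
      simp only [hf, Finset.mem_filter, Finset.mem_univ, true_and]
      constructor
      · rintro ⟨h1, h2⟩; exact ⟨h1.symm, fun h => h2 h.symm⟩
      · rintro ⟨h1, h2⟩; exact ⟨h1.symm, fun h => h2 h.symm⟩
    -- averaging
    have key : ∀ A : Finset (Fin n), A.Nonempty →
        ∃ v, ((A ∩ f v).card : ℝ) < (A.card : ℝ) * s / n := by
      intro A hA
      by_contra hc
      push_neg at hc
      have hswap : (∑ v : Fin n, (A ∩ f v).card) = ∑ u ∈ A, (f u).card := by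
        have h1 : ∀ v : Fin n, (A ∩ f v).card = ∑ u ∈ A, if u ∈ f v then 1 else 0 := by
          intro v
          rw [← Finset.filter_mem_eq_inter, Finset.card_filter]
        have h2 : ∀ u : Fin n, (∑ v : Fin n, if u ∈ f v then 1 else 0) = (f u).card := by
          intro u
          rw [Finset.card_eq_sum_ones]
          rw [← Finset.sum_filter]
          congr 1
          ext v
          simp only [Finset.mem_filter, Finset.mem_univ, true_and]
          exact hsymm u v
        simp only [h1]
        rw [Finset.sum_comm]
        exact Finset.sum_congr rfl fun u _ => h2 u
      have hlow : (A.card : ℝ) * s ≤ ∑ v : Fin n, ((A ∩ f v).card : ℝ) := by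
        calc (A.card:ℝ) * s = ∑ _v : Fin n, ((A.card:ℝ) * s / n) := by
              rw [Finset.sum_const, Finset.card_univ, Fintype.card_fin, nsmul_eq_mul]
              field_simp
          _ ≤ _ := Finset.sum_le_sum (fun v _ => hc v)
      have hhigh : (∑ u ∈ A, ((f u).card : ℝ)) < (A.card : ℝ) * s := by
        have := Finset.sum_lt_sum_of_nonempty hA (fun u _ => hcon u)
        simpa [Finset.sum_const, nsmul_eq_mul] using this
      have hcastsum : (∑ v : Fin n, ((A ∩ f v).card : ℝ)) = ∑ u ∈ A, ((f u).card : ℝ) := by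
        exact_mod_cast congrArg (fun k : ℕ => (k:ℝ)) hswap
      rw [hcastsum] at hlow
      linarith
    -- inserting a vertex shrinks the undominated set
    have hstep : ∀ (S : Finset (Fin n)) (v : Fin n),
        undom (insert v S) ⊆ undom S ∩ f v := by
      intro S v u hu
      simp only [hundom, Finset.mem_filter, Finset.mem_univ, true_and,
        Finset.mem_insert, not_or] at hu
      obtain ⟨⟨huv, huS⟩, hadj⟩ := hu
      simp only [Finset.mem_inter, hundom, hf, Finset.mem_filter, Finset.mem_univ, true_and]
      refine ⟨⟨huS, fun w hw => hadj w (Or.inr hw)⟩, huv, fun h => hadj v (Or.inl rfl) h.symm⟩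
    -- the greedy induction
    have P : ∀ j : ℕ, ∃ S : Finset (Fin n), S.card ≤ j + 1 ∧
        ((undom S).card : ℝ) < (n:ℝ) ^ (((b:ℝ) - 1 - (j:ℕ)) / (b:ℝ)) := by
      intro j
      induction j with
      | zero =>
        have hpos : 0 < n := hn
        refine ⟨{⟨0, hpos⟩}, by simp, ?_⟩
        have hsub : undom {(⟨0, hpos⟩ : Fin n)} ⊆ f ⟨0, hpos⟩ := by
          intro u hu
          simp only [hundom, Finset.mem_filter, Finset.mem_univ, true_and,
            Finset.mem_singleton] at hu
          simp only [hf, Finset.mem_filter, Finset.mem_univ, true_and]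
          exact ⟨hu.1, fun h => hu.2 _ rfl h.symm⟩
        have h1 : ((undom {(⟨0, hpos⟩ : Fin n)}).card : ℝ) ≤ ((f ⟨0, hpos⟩).card : ℝ) := by
          exact_mod_cast Finset.card_le_card hsub
        calc ((undom {(⟨0, hpos⟩ : Fin n)}).card : ℝ) ≤ _ := h1
          _ < s := hcon _
          _ = (n:ℝ) ^ (((b:ℝ) - 1 - ((0:ℕ):ℝ)) / (b:ℝ)) := by norm_num [hs]
      | succ j ih =>
        obtain ⟨S, hScard, hSsmall⟩ := ih
        rcases (undom S).eq_empty_or_nonempty with he | hne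
        · refine ⟨S, le_trans hScard (by omega), ?_⟩
          rw [he]
          simpa using Real.rpow_pos_of_pos hn0 _
        · obtain ⟨v, hv⟩ := key (undom S) hne
          refine ⟨insert v S, le_trans (Finset.card_insert_le _ _) (by omega), ?_⟩
          have h1 : ((undom (insert v S)).card : ℝ) ≤ ((undom S ∩ f v).card : ℝ) := by
            exact_mod_cast Finset.card_le_card (hstep S v)
          have h2 : ((undom S).card : ℝ) * s / n <
              (n:ℝ) ^ (((b:ℝ) - 1 - (j:ℕ)) / (b:ℝ)) * s / n := by
            gcongr
          have h3 : (n:ℝ) ^ (((b:ℝ) - 1 - (j:ℕ)) / (b:ℝ)) * s / n =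
              (n:ℝ) ^ (((b:ℝ) - 1 - ((j+1:ℕ):ℝ)) / (b:ℝ)) := by
            rw [hs, ← Real.rpow_add hn0, ← Real.rpow_sub_one (ne_of_gt hn0)]
            congr 1
            push_cast
            field_simp
            ring
          calc ((undom (insert v S)).card : ℝ) ≤ _ := h1
            _ < _ := lt_of_lt_of_le hv h2.le
            _ = _ := h3
    obtain ⟨S, hScard, hSsmall⟩ := P (b - 1)
    have hbcast : (((b-1:ℕ)):ℝ) = (b:ℝ) - 1 := by
      push_cast [Nat.cast_sub (by omega : 1 ≤ b)]
      ring
    rw [hbcast] at hSsmall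
    have h0 : ((b:ℝ) - 1 - ((b:ℝ) - 1)) / (b:ℝ) = 0 := by ring
    rw [h0, Real.rpow_zero] at hSsmall
    have hlt1 : (undom S).card < 1 := by exact_mod_cast hSsmall
    have hcard0 : (undom S).card = 0 := Nat.lt_one_iff.mp hlt1
    have hSdom : Dominates G S := by
      intro u huS
      by_contra hno
      push_neg at hno
      have : u ∈ undom S := by
        simp only [hundom, Finset.mem_filter, Finset.mem_univ, true_and]
        exact ⟨huS, fun w hw h => hno w hw h⟩
      rw [Finset.card_eq_zero] at hcard0
      simp [hcard0] at this
    have : domNum G ≤ S.card := Nat.sInf_le ⟨S, rfl, hSdom⟩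
    have hSb : S.card ≤ b := le_trans hScard (by omega)
    omega
  refine ⟨hv, ?_⟩
  obtain ⟨v, hvcard⟩ := hv
  intro m _hm
  have hceil : ⌈s⌉₊ ≤ (f v).card := Nat.ceil_le.mpr hvcard
  have h1 : Nat.choose ⌈s⌉₊ m ≤ Nat.choose (f v).card m := Nat.choose_le_choose m hceil
  have h2 : Nat.choose (f v).card m = (Finset.powersetCard m (f v)).card :=
    (Finset.card_powersetCard m (f v)).symm
  have h3 : ∀ (inst : DecidablePred (fun S : Finset (Fin n) => Dominates G S)),
      Finset.powersetCard m (f v) ⊆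
        (Finset.powersetCard m Finset.univ).filter (fun S => ¬ Dominates G S) := by
    intro inst S hS
    rw [Finset.mem_powersetCard] at hS
    rw [Finset.mem_filter, Finset.mem_powersetCard]
    refine ⟨⟨Finset.subset_univ _, hS.2⟩, fun hdomS => ?_⟩
    have hvS : v ∉ S := by
      intro h
      have := hS.1 h
      simp [hf] at this
    obtain ⟨u, huS, hadj⟩ := hdomS v hvS
    have hmem := hS.1 huS
    simp only [hf, Finset.mem_filter, Finset.mem_univ, true_and] at hmem
    exact hmem.2 hadj
  unfold nonDomCount
  exact le_trans (le_trans h1 h2.le) (Finset.card_le_card (h3 _))
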